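/- Let A be an n×n irreducible nonnegative real matrix (n ≥ 2) and let x ∈ ℝ^n have all entries positive. Suppose x is not a Perron vector of A. If max_{1≤i≤n} (A²x)_i/(Ax)_i ≤ (Ax)_j/x_j for every j ∈ {1,…,n}, then max_{1≤i≤n} (A²x)_i/(Ax)_i < max_{1≤i≤n} (Ax)_i/x_i. -/

import Mathlib

open Matrix

/-- A square matrix is irreducible if no permutation similarity puts it in block
upper triangular form; equivalently, for every nonempty proper subset `S` of indices
there are `i ∈ S` and `j ∉ S` with `A i j ≠ 0`. -/
def IsIrreducibleMatrix {n : ℕ} (A : Matrix (Fin n) (Fin n) ℝ) : Prop :=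
  ∀ S : Finset (Fin n), S.Nonempty → S ≠ Finset.univ → ∃ i ∈ S, ∃ j, j ∉ S ∧ A i j ≠ 0

/-- The Perron value (spectral radius) of a real square matrix: the supremum of the
absolute values of its complex eigenvalues (roots of the characteristic polynomial). -/
noncomputable def perronValue {n : ℕ} (A : Matrix (Fin n) (Fin n) ℝ) : ℝ :=
  sSup {r : ℝ | ∃ μ : ℂ, ((A.map Complex.ofReal).charpoly).IsRoot μ ∧ r = ‖μ‖}

/-- A Perron vector of `A`: an eigenvector associated with the Perron value of `A`. -/
def IsPerronVector {n : ℕ} (A : Matrix (Fin n) (Fin n) ℝ) (x : Fin n → ℝ) : Prop :=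
  x ≠ 0 ∧ A.mulVec x = perronValue A • x

lemma charpoly_isRoot_iff {n : ℕ} (M : Matrix (Fin n) (Fin n) ℂ) (μ : ℂ) :
    M.charpoly.IsRoot μ ↔ ∃ v : Fin n → ℂ, v ≠ 0 ∧ M.mulVec v = μ • v := by
  have h1 : M.charpoly.eval μ = (Matrix.scalar (Fin n) μ - M).det := by
    rw [Matrix.charpoly, eval_det, Matrix.matPolyEquiv_charmatrix]
    simp
  rw [Polynomial.IsRoot, h1, ← Matrix.exists_mulVec_eq_zero_iff]
  constructor
  · rintro ⟨v, hv, hmv⟩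
    refine ⟨v, hv, ?_⟩
    have := hmv
    rw [Matrix.sub_mulVec, sub_eq_zero] at this
    rw [← this]
    funext i
    simp [Matrix.scalar, Matrix.mulVec_diagonal]
  · rintro ⟨v, hv, hmv⟩
    refine ⟨v, hv, ?_⟩
    rw [Matrix.sub_mulVec, sub_eq_zero, hmv]
    funext i
    simp [Matrix.scalar, Matrix.mulVec_diagonal]

lemma perronValue_eq_of_pos_eigenvector {n : ℕ} (hn : 0 < n)
    (A : Matrix (Fin n) (Fin n) ℝ) (x : Fin n → ℝ)
    (hA : ∀ i j, 0 ≤ A i j) (hx : ∀ i, 0 < x i) (r : ℝ)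
    (hr : A.mulVec x = r • x) : perronValue A = r := by
  haveI : NeZero n := ⟨hn.ne'⟩
  -- r is nonnegative
  have hr0 : 0 ≤ r := by
    have h0 : 0 ≤ A.mulVec x 0 := by
      simp only [Matrix.mulVec, dotProduct]
      exact Finset.sum_nonneg fun j _ => mul_nonneg (hA 0 j) (hx j).le
    rw [hr] at h0
    simp only [Pi.smul_apply, smul_eq_mul] at h0
    nlinarith [hx (0 : Fin n)]
  -- every eigenvalue has modulus ≤ r
  have key : ∀ μ : ℂ, ((A.map Complex.ofReal).charpoly).IsRoot μ → ‖μ‖ ≤ r := by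
    intro μ hμ
    obtain ⟨v, hv, hmv⟩ := (charpoly_isRoot_iff _ μ).mp hμ
    set y : Fin n → ℝ := fun i => ‖v i‖ with hy
    have hyineq : ∀ i, ‖μ‖ * y i ≤ ∑ j, A i j * y j := by
      intro i
      have h1 : (μ • v) i = ∑ j, ((A i j : ℂ) * v j) := by
        rw [← hmv]; simp [Matrix.mulVec, Matrix.map_apply, dotProduct, mul_comm]
      calc ‖μ‖ * y i = ‖(μ • v) i‖ := by simp [hy]
        _ = ‖∑ j, ((A i j : ℂ) * v j)‖ := by rw [h1]
        _ ≤ ∑ j, ‖(A i j : ℂ) * v j‖ := norm_sum_le _ _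
        _ = ∑ j, A i j * y j := by
              refine Finset.sum_congr rfl fun j _ => ?_
              rw [norm_mul, Complex.norm_real, Real.norm_eq_abs, abs_of_nonneg (hA i j)]
    -- take the maximizer of y i / x i
    obtain ⟨i0, _, hi0⟩ := Finset.exists_max_image Finset.univ (fun i => y i / x i)
      ⟨0, Finset.mem_univ 0⟩
    set t := y i0 / x i0 with ht
    have hyx : ∀ i, y i ≤ t * x i := fun i =>
      (div_le_iff₀ (hx i)).mp (hi0 i (Finset.mem_univ i))
    have ht0 : 0 < t := by
      obtain ⟨k, hk⟩ : ∃ k, v k ≠ 0 := by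
        by_contra hc
        push_neg at hc
        exact hv (funext hc)
      have hyk : 0 < y k := by simpa [hy] using (norm_pos_iff.mpr hk)
      exact lt_of_lt_of_le (div_pos hyk (hx k)) (hi0 k (Finset.mem_univ k))
    have hyi0 : y i0 = t * x i0 := by
      rw [ht, div_mul_cancel₀ _ (hx i0).ne']
    have hchain : ‖μ‖ * y i0 ≤ r * y i0 := by
      calc ‖μ‖ * y i0 ≤ ∑ j, A i0 j * y j := hyineq i0
        _ ≤ ∑ j, A i0 j * (t * x j) := Finset.sum_le_sum fun j _ =>
            mul_le_mul_of_nonneg_left (hyx j) (hA i0 j)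
        _ = t * A.mulVec x i0 := by
            simp only [Matrix.mulVec, dotProduct, Finset.mul_sum]
            exact Finset.sum_congr rfl fun j _ => by ring
        _ = t * (r * x i0) := by rw [hr]; simp
        _ = r * y i0 := by rw [hyi0]; ring
    have hyi0pos : 0 < y i0 := by rw [hyi0]; exact mul_pos ht0 (hx i0)
    exact le_of_mul_le_mul_right hchain hyi0pos
  -- r is itself an eigenvalue modulus
  have hmem : r ∈ {s : ℝ | ∃ μ : ℂ, ((A.map Complex.ofReal).charpoly).IsRoot μ ∧
      s = ‖μ‖} := by
    refine ⟨(r : ℂ), ?_, by rw [Complex.norm_real, Real.norm_eq_abs, abs_of_nonneg hr0]⟩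
    rw [charpoly_isRoot_iff]
    refine ⟨fun i => (x i : ℂ), ?_, ?_⟩
    · intro hc
      have := congrFun hc 0
      simp only [Pi.zero_apply, Complex.ofReal_eq_zero] at this
      exact (hx 0).ne' this
    · funext i
      have hri := congrFun hr i
      simp only [Pi.smul_apply, smul_eq_mul] at hri
      simp only [Matrix.mulVec, dotProduct, Matrix.map_apply, Pi.smul_apply, smul_eq_mul]
      rw [show ∑ j, (A i j : ℂ) * (x j : ℂ) = ((∑ j, A i j * x j : ℝ) : ℂ) by push_cast; rfl]
      rw [show (∑ j, A i j * x j) = r * x i from hri]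
      push_cast; ring
  have hbdd : BddAbove {s : ℝ | ∃ μ : ℂ, ((A.map Complex.ofReal).charpoly).IsRoot μ ∧
      s = ‖μ‖} := ⟨r, by rintro s ⟨μ, hμ, rfl⟩; exact key μ hμ⟩
  refine le_antisymm (csSup_le ⟨r, hmem⟩ ?_) (le_csSup hbdd hmem)
  rintro s ⟨μ, hμ, rfl⟩
  exact key μ hμ

/-- Let `A` be `n × n` (`n ≥ 2`) irreducible and nonnegative, `x` entrywise
positive and not a Perron vector of `A`. If `max_i (A²x)_i/(Ax)_i ≤ (Ax)_j/x_j` for every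
`j`, then `max_i (A²x)_i/(Ax)_i < max_i (Ax)_i/x_i`. -/
theorem max_ratio_strict_decrease_case1 {n : ℕ} (hn : 2 ≤ n)
    (A : Matrix (Fin n) (Fin n) ℝ) (x : Fin n → ℝ)
    (hirr : IsIrreducibleMatrix A) (hnonneg : ∀ i j, 0 ≤ A i j) (hx : ∀ i, 0 < x i)
    (hnp : ¬ IsPerronVector A x)
    (h : ∀ j, (⨆ i, A.mulVec (A.mulVec x) i / A.mulVec x i) ≤ A.mulVec x j / x j) :
    (⨆ i, A.mulVec (A.mulVec x) i / A.mulVec x i) < ⨆ i, A.mulVec x i / x i := by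
  haveI : NeZero n := ⟨by omega⟩
  by_contra hcon
  push_neg at hcon
  set M := ⨆ i, A.mulVec (A.mulVec x) i / A.mulVec x i with hM
  have hbdd : BddAbove (Set.range fun j => A.mulVec x j / x j) :=
    (Set.finite_range _).bddAbove
  have heq : ∀ j, A.mulVec x j / x j = M := fun j =>
    le_antisymm ((le_ciSup hbdd j).trans hcon) (h j)
  have heig : A.mulVec x = M • x := by
    funext j
    have := heq j
    rw [div_eq_iff (hx j).ne'] at this
    simp [this, mul_comm]
  have hpv : perronValue A = M :=
    perronValue_eq_of_pos_eigenvector (by omega) A x hnonneg hx M heig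
  exact hnp ⟨fun hc => (hx 0).ne' (congrFun hc 0), by rw [hpv]; exact heig⟩
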